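/- arXiv:1011.3836 — 3 statements merged into one kernel-verified Lean document; each statement's English description precedes it below -/
import Mathlib

section
/- Let X be a proper metric space (i.e. every closed ball of X is compact), let K ⊆ X be a nonempty closed connected subset, let x ∈ K, and let D be a nonnegative real number with D ≤ diam(K), the diameter being taken in [0,∞]. Then there exists a compact connected subset K(D) ⊆ K containing x whose diameter is exactly D. (This is Lemma 7.1 of the paper, which states it for ℝⁿ equipped with any distance inducing the standard topology; properness of the metric is the hypothesis needed to make the statement precise.) -/
open Set Metric

/-- In a compact Hausdorff space, a connected component can be separated from a
disjoint closed set by a clopen set. -/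
lemma aux_clopen_sep {Y : Type*} [TopologicalSpace Y] [CompactSpace Y] [T2Space Y]
    (x : Y) {B : Set Y} (hB : IsClosed B) (hd : Disjoint (connectedComponent x) B) :
    ∃ U : Set Y, IsClopen U ∧ connectedComponent x ⊆ U ∧ Disjoint U B := by
  let N := { s : Set Y // IsClopen s ∧ x ∈ s }
  haveI : Nonempty N := ⟨⟨univ, isClopen_univ, mem_univ x⟩⟩
  have hdir : Directed (· ⊇ ·) fun s : N => s.val := by
    rintro ⟨s, hs, hxs⟩ ⟨t, ht, hxt⟩
    exact ⟨⟨s ∩ t, hs.inter ht, ⟨hxs, hxt⟩⟩, inter_subset_left, inter_subset_right⟩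
  have heq : (⋂ s : N, s.val) = connectedComponent x :=
    (connectedComponent_eq_iInter_isClopen x).symm
  obtain ⟨s, hs⟩ : ∃ s : N, s.val ⊆ Bᶜ := by
    apply exists_subset_nhds_of_compactSpace hdir (fun s => s.2.1.1)
    intro y hy
    rw [heq] at hy
    exact hB.isOpen_compl.mem_nhds (disjoint_left.mp hd hy)
  exact ⟨s.val, s.2.1, connectedComponent_subset_iInter_isClopen.trans (iInter_subset _ s),
    disjoint_left.mpr fun y hy => hs hy⟩

lemma aux_compact_ccIn {X : Type*} [TopologicalSpace X] [T2Space X] {A : Set X}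
    (hA : IsCompact A) (x : X) : IsCompact (connectedComponentIn A x) := by
  by_cases hx : x ∈ A
  · rw [connectedComponentIn_eq_image hx]
    haveI : CompactSpace A := isCompact_iff_compactSpace.mp hA
    exact (isClosed_connectedComponent.isCompact).image continuous_subtype_val
  · rw [connectedComponentIn_eq_empty hx]; exact isCompact_empty

/-- Boundary-bumping style fact: the component of `x` in a compact set `A` can be
separated from a disjoint closed set by a set which is closed and of the form `A ∩ V`
with `V` open. -/
lemma aux_bump {X : Type*} [TopologicalSpace X] [T2Space X] {A : Set X} (hA : IsCompact A)
    {x : X} (hx : x ∈ A) {B : Set X} (hB : IsClosed B)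
    (hd : Disjoint (connectedComponentIn A x) B) :
    ∃ U : Set X, U ⊆ A ∧ connectedComponentIn A x ⊆ U ∧ Disjoint U B ∧ IsClosed U ∧
      ∃ V : Set X, IsOpen V ∧ U = A ∩ V := by
  haveI : CompactSpace A := isCompact_iff_compactSpace.mp hA
  have himg : connectedComponentIn A x = (↑) '' connectedComponent (⟨x, hx⟩ : A) :=
    connectedComponentIn_eq_image hx
  have hd' : Disjoint (connectedComponent (⟨x, hx⟩ : A)) ((↑) ⁻¹' B : Set A) := by
    rw [disjoint_left]
    intro y hy hyB
    exact disjoint_left.mp hd (himg ▸ mem_image_of_mem _ hy) hyB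
  obtain ⟨U, hUclopen, hUsub, hUdisj⟩ :=
    aux_clopen_sep (⟨x, hx⟩ : A) (hB.preimage continuous_subtype_val) hd'
  obtain ⟨V, hVopen, hVeq⟩ := isOpen_induced_iff.mp hUclopen.2
  refine ⟨(↑) '' U, by simp, ?_, ?_, ?_, V, hVopen, ?_⟩
  · rw [himg]; exact image_mono hUsub
  · rw [disjoint_left]
    rintro y ⟨z, hz, rfl⟩ hyB
    exact disjoint_left.mp hUdisj hz hyB
  · exact (hUclopen.1.isCompact.image continuous_subtype_val).isClosed
  · rw [← hVeq, Subtype.image_preimage_coe]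




/-- Lemma 7.1 of the paper: in a proper metric space, any nonempty closed connected
set `K`, any point `x ∈ K` and any nonnegative real `D` not exceeding the diameter
of `K` (taken in `[0,∞]`) admit a compact connected subset `K' ⊆ K` containing `x`
whose diameter is exactly `D`. -/
theorem stmt_0 {X : Type*} [MetricSpace X] [ProperSpace X]
    {K : Set X} (hKne : K.Nonempty) (hKcl : IsClosed K) (hKconn : IsConnected K)
    {x : X} (hx : x ∈ K) {D : ℝ} (hD : 0 ≤ D)
    (hdiam : ENNReal.ofReal D ≤ EMetric.diam K) :
    ∃ K' : Set X, K' ⊆ K ∧ IsCompact K' ∧ IsConnected K' ∧ x ∈ K' ∧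
      EMetric.diam K' = ENNReal.ofReal D := by
  set F : Set (Set X) := {C | C ⊆ K ∧ IsCompact C ∧ IsPreconnected C ∧ x ∈ C ∧
    EMetric.diam C ≤ ENNReal.ofReal D} with hF
  obtain ⟨M, -, hMmem, hMmax⟩ : ∃ M, {x} ⊆ M ∧ Maximal (· ∈ F) M := by
    apply zorn_subset_nonempty
    · rintro c hcF hchain ⟨c₀, hc₀⟩
      refine ⟨closure (⋃₀ c), ⟨?_, ?_, ?_, ?_, ?_⟩, fun s hs => (subset_sUnion_of_mem hs).trans subset_closure⟩
      · exact closure_minimal (sUnion_subset fun s hs => (hcF hs).1) hKcl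
      · apply isCompact_of_isClosed_isBounded isClosed_closure
        rw [isBounded_iff_ediam_ne_top]
        intro htop
        have : EMetric.diam (⋃₀ c) ≤ ENNReal.ofReal D := by
          apply EMetric.diam_le
          intro y hy z hz
          obtain ⟨a, hac, hya⟩ := hy
          obtain ⟨b, hbc, hzb⟩ := hz
          rcases hchain.total hac hbc with h | h
          · exact le_trans (EMetric.edist_le_diam_of_mem (h hya) hzb) (hcF hbc).2.2.2.2
          · exact le_trans (EMetric.edist_le_diam_of_mem hya (h hzb)) (hcF hac).2.2.2.2
        rw [EMetric.diam_closure] at htop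
        exact (lt_of_le_of_lt ((show EMetric.diam (⋃₀ c) = ⊤ from htop) ▸ this) ENNReal.ofReal_lt_top).false
      · exact (isPreconnected_sUnion x c (fun s hs => (hcF hs).2.2.2.1)
          (fun s hs => (hcF hs).2.2.1)).closure
      · exact subset_closure (subset_sUnion_of_mem hc₀ (hcF hc₀).2.2.2.1)
      · rw [show EMetric.diam (closure (⋃₀ c)) = EMetric.diam (⋃₀ c) from Metric.ediam_closure _]
        apply EMetric.diam_le
        intro y hy z hz
        obtain ⟨a, hac, hya⟩ := hy
        obtain ⟨b, hbc, hzb⟩ := hz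
        rcases hchain.total hac hbc with h | h
        · exact le_trans (EMetric.edist_le_diam_of_mem (h hya) hzb) (hcF hbc).2.2.2.2
        · exact le_trans (EMetric.edist_le_diam_of_mem hya (h hzb)) (hcF hac).2.2.2.2
    · exact ⟨singleton_subset_iff.mpr hx, isCompact_singleton,
        isPreconnected_singleton, mem_singleton x, by rw [show EMetric.diam ({x} : Set X) = 0 from Metric.ediam_singleton]; exact zero_le⟩
  obtain ⟨hMK, hMcomp, hMconn, hxM, hMdiam⟩ := hMmem
  refine ⟨M, hMK, hMcomp, ⟨⟨x, hxM⟩, hMconn⟩, hxM, hMdiam.antisymm ?_⟩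
  by_contra hlt
  push_neg at hlt
  -- Set up the bumping argument
  set d : ℝ := (EMetric.diam M).toReal with hd_def
  have hMdne : EMetric.diam M ≠ ⊤ := (hlt.trans ENNReal.ofReal_lt_top).ne
  have hdD : d < D := by
    have := ENNReal.toReal_strict_mono (by simp) hlt
    rwa [ENNReal.toReal_ofReal hD] at this
  set ε : ℝ := (D - d) / 2 with hε_def
  have hε : 0 < ε := by rw [hε_def]; linarith
  have hdε : d + 2 * ε = D := by rw [hε_def]; ring
  set A : Set X := K ∩ {y | infDist y M ≤ ε} with hA_def
  have hMA : M ⊆ A := fun y hy => ⟨hMK hy, by simp [infDist_zero_of_mem hy, hε.le]⟩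
  have hxA : x ∈ A := hMA hxM
  have hAcl : IsClosed A := hKcl.inter (isClosed_le (continuous_infDist_pt M) continuous_const)
  have hAdiam : EMetric.diam A ≤ ENNReal.ofReal D := by
    apply EMetric.diam_le
    intro y hy z hz
    obtain ⟨p, hpM, hyp⟩ := hMcomp.exists_infDist_eq_dist ⟨x, hxM⟩ y
    obtain ⟨q, hqM, hzq⟩ := hMcomp.exists_infDist_eq_dist ⟨x, hxM⟩ z
    have hpq : dist p q ≤ d := dist_le_diam_of_mem hMcomp.isBounded hpM hqM
    have : dist y z ≤ D := by
      calc dist y z ≤ dist y p + dist p q + dist q z := dist_triangle4 y p q z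
        _ ≤ ε + d + ε := by
            have h1 : dist y p ≤ ε := hyp ▸ hy.2
            have h2 : dist q z ≤ ε := by rw [dist_comm]; exact hzq ▸ hz.2
            linarith
        _ = D := by linarith
    rw [edist_dist]
    exact ENNReal.ofReal_le_ofReal this
  have hAbd : IsCompact A := by
    apply isCompact_of_isClosed_isBounded hAcl
    rw [isBounded_iff_ediam_ne_top]
    exact (hAdiam.trans_lt ENNReal.ofReal_lt_top).ne
  -- the component of x in A is in F and contains M, hence equals M
  set C : Set X := connectedComponentIn A x with hC_def
  have hMC : M ⊆ C := hMconn.subset_connectedComponentIn hxM hMA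
  have hCM : C = M := by
    refine subset_antisymm (hMmax ⟨?_, ?_, ?_, ?_, ?_⟩ hMC) hMC
    · exact (connectedComponentIn_subset A x).trans inter_subset_left
    · exact aux_compact_ccIn hAbd x
    · exact isPreconnected_connectedComponentIn
    · exact mem_connectedComponentIn hxA
    · exact (EMetric.diam_mono (connectedComponentIn_subset A x)).trans hAdiam
  by_cases hcase : K ⊆ A
  · -- then A = K, so M = connectedComponentIn K x = K, contradicting diam
    have hAK : A = K := subset_antisymm inter_subset_left (fun y hy => hcase hy)
    have : M = K := by
      rw [← hCM, hC_def, hAK, hKconn.isPreconnected.connectedComponentIn hx]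
    exact absurd (hdiam.trans_lt (this ▸ hlt)) (lt_irrefl _)
  · obtain ⟨y, hyK, hyA⟩ := not_subset.mp hcase
    have hyfar : ε < infDist y M := by
      by_contra h
      push_neg at h
      exact hyA ⟨hyK, h⟩
    -- boundary bumping: separate M from the "far" part of A by a clopen set
    set B : Set X := {z | ε / 2 ≤ infDist z M} with hB_def
    have hBcl : IsClosed B := isClosed_le continuous_const (continuous_infDist_pt M)
    have hdisj : Disjoint C B := by
      rw [hCM, disjoint_left]
      intro z hzM hzB
      have : infDist z M = 0 := infDist_zero_of_mem hzM
      rw [hB_def] at hzB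
      simp only [mem_setOf_eq, this] at hzB
      linarith
    obtain ⟨U, hUA, hCU, hUB, hUcl, V, hVopen, hUV⟩ := aux_bump hAbd hxA hBcl hdisj
    -- U is clopen in K, nonempty, proper: contradiction with connectedness of K
    have hMU : M ⊆ U := hCM ▸ hCU
    haveI : PreconnectedSpace K := Subtype.preconnectedSpace hKconn.isPreconnected
    have hclopen : IsClopen ((↑) ⁻¹' U : Set K) := by
      constructor
      · exact hUcl.preimage continuous_subtype_val
      · have : ((↑) ⁻¹' U : Set K) = (↑) ⁻¹' (V ∩ {z | infDist z M < ε / 2}) := by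
          ext ⟨z, hzK⟩
          simp only [mem_preimage, mem_inter_iff, mem_setOf_eq]
          constructor
          · intro hzU
            refine ⟨(hUV ▸ hzU : z ∈ A ∩ V).2, ?_⟩
            by_contra h
            push_neg at h
            exact disjoint_left.mp hUB hzU h
          · rintro ⟨hzV, hzd⟩
            rw [hUV]
            exact ⟨⟨hzK, le_of_lt (hzd.trans_le (by linarith))⟩, hzV⟩
        rw [this]
        exact (hVopen.inter (isOpen_lt (continuous_infDist_pt M) continuous_const)).preimage
          continuous_subtype_val
    rcases isClopen_iff.mp hclopen with h | h
    · have : (⟨x, hx⟩ : K) ∈ ((↑) ⁻¹' U : Set K) := hMU hxM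
      rw [h] at this
      exact this
    · have : (⟨y, hyK⟩ : K) ∈ ((↑) ⁻¹' U : Set K) := h ▸ mem_univ _
      have : y ∈ A := hUA this
      exact hyA this
end

section
/- Fix integers d, ℓ ≥ 1 and α ∈ (0,1]. For every ε > 0 there exists δ > 0 with the following property: for every C¹ map v₀ : ℝ^d → ℝ^ℓ whose derivative Dv₀ is α-Hölder, and for all real numbers D̂ > 2D > 0, if the C^{1+α}-size of v₀ is at most δ and D̂^{-(1+α)} · sup_{y ∈ B(0,D̂)} ‖v₀(y)‖ ≤ δ, then there exists a C¹ map v : ℝ^d → ℝ^ℓ with α-Hölder derivative which coincides with v₀ on the ball B(0,D), vanishes outside the ball B(0,D̂), and whose C^{1+α}-size is at most ε. (Lemma 6.1 of the paper, the elementary C^{1+α}-perturbation lemma.) -/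
open Metric NNReal Set
open scoped RealInnerProductSpace

lemma holderWith_of_dist_le' {X Y : Type*} [PseudoMetricSpace X] [PseudoMetricSpace Y]
    {C r : ℝ≥0} {f : X → Y} (h : ∀ x y, dist (f x) (f y) ≤ C * dist x y ^ (r : ℝ)) :
    HolderWith C r f := by
  intro x y
  rw [edist_dist, edist_dist, ← ENNReal.ofReal_coe_nnreal,
    ENNReal.ofReal_rpow_of_nonneg dist_nonneg r.coe_nonneg,
    ← ENNReal.ofReal_mul C.coe_nonneg]
  exact ENNReal.ofReal_le_ofReal (h x y)

lemma aux_mul_rpow {α r R : ℝ} (hα0 : 0 < α) (hα1 : α ≤ 1) (hr : 0 ≤ r) (hR : 0 < R)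
    (hrR : r ≤ R) : r * R ^ α ≤ r ^ α * R := by
  rcases eq_or_lt_of_le hr with h0 | h0
  · simp [← h0, Real.zero_rpow hα0.ne']
  · have h1 : r = r ^ α * r ^ (1 - α) := by
      rw [← Real.rpow_add h0]; norm_num
    have h2 : r ^ (1 - α) ≤ R ^ (1 - α) := Real.rpow_le_rpow hr hrR (by linarith)
    have h3 : R ^ (1 - α) * R ^ α = R := by
      rw [← Real.rpow_add hR]; norm_num
    calc r * R ^ α = r ^ α * (r ^ (1 - α) * R ^ α) := by rw [← mul_assoc, ← h1]
      _ ≤ r ^ α * (R ^ (1 - α) * R ^ α) := by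
          have : (0:ℝ) ≤ r ^ α := Real.rpow_nonneg hr _
          have h4 : (0:ℝ) ≤ R ^ α := Real.rpow_nonneg hR.le _
          exact mul_le_mul_of_nonneg_left (mul_le_mul_of_nonneg_right h2 h4) this
      _ = r ^ α * R := by rw [h3]

open scoped RealInnerProductSpace


lemma deriv_interp_bound {E F : Type*} [NormedAddCommGroup E] [InnerProductSpace ℝ E]
    [NormedAddCommGroup F] [NormedSpace ℝ F]
    {v : E → F} (hv : ContDiff ℝ 1 v) {δ R α : ℝ} (hδ : 0 ≤ δ) (hR : 0 < R)
    (hα0 : 0 < α) (hα1 : α ≤ 1)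
    (hH : ∀ a b : E, ‖fderiv ℝ v a - fderiv ℝ v b‖ ≤ δ * ‖a - b‖ ^ α)
    (hsup : ∀ y : E, ‖y‖ ≤ R → ‖v y‖ ≤ δ * R ^ (1 + α)) :
    ∀ x : E, ‖x‖ ≤ 7 / 8 * R → ‖fderiv ℝ v x‖ ≤ 17 * δ * R ^ α := by
  intro x hx
  have hRα : (0:ℝ) ≤ R ^ α := Real.rpow_nonneg hR.le _
  apply ContinuousLinearMap.opNorm_le_bound _ (by positivity)
  intro e
  rcases eq_or_ne e 0 with rfl | he
  · simp
  -- main claim for unit vectors with nonpositive inner product with x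
  have main : ∀ u : E, ‖u‖ = 1 → (inner ℝ x u : ℝ) ≤ 0 → ‖fderiv ℝ v x u‖ ≤ 17 * δ * R ^ α := by
    intro u hu hxu
    set t : ℝ := R / 8 with ht
    have htpos : 0 < t := by positivity
    have hend : ‖x + t • u‖ ≤ R := by
      have hsq : ‖x + t • u‖ ^ 2 = ‖x‖ ^ 2 + 2 * (inner ℝ x (t • u) : ℝ) + ‖t • u‖ ^ 2 :=
        norm_add_sq_real x (t • u)
      have h1 : (inner ℝ x (t • u) : ℝ) = t * (inner ℝ x u : ℝ) := real_inner_smul_right x u t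
      have h2 : ‖t • u‖ = t := by
        rw [norm_smul, Real.norm_eq_abs, abs_of_pos htpos, hu, mul_one]
      have h3 : ‖x + t • u‖ ^ 2 ≤ R ^ 2 := by
        rw [hsq, h1, h2]
        nlinarith [norm_nonneg x, hx, hxu, htpos]
      nlinarith [norm_nonneg (x + t • u)]
    set g : ℝ → F := fun s => v (x + s • u) - s • (fderiv ℝ v x u) with hg
    have hgd : ∀ s ∈ Icc (0:ℝ) t,
        HasDerivWithinAt g (fderiv ℝ v (x + s • u) u - fderiv ℝ v x u) (Icc 0 t) s := by
      intro s _
      have hline : HasDerivAt (fun s : ℝ => x + s • u) u s := by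
        simpa using ((hasDerivAt_id s).smul_const u).const_add x
      have hv' : HasDerivAt (fun s : ℝ => v (x + s • u)) (fderiv ℝ v (x + s • u) u) s :=
        ((hv.differentiable one_ne_zero) _).hasFDerivAt.comp_hasDerivAt s hline
      have hlin : HasDerivAt (fun s : ℝ => s • (fderiv ℝ v x u)) (fderiv ℝ v x u) s := by
        simpa using (hasDerivAt_id s).smul_const (fderiv ℝ v x u)
      exact (hv'.sub hlin).hasDerivWithinAt
    have hbound : ∀ s ∈ Ico (0:ℝ) t,
        ‖fderiv ℝ v (x + s • u) u - fderiv ℝ v x u‖ ≤ δ * t ^ α := by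
      intro s hs
      calc ‖fderiv ℝ v (x + s • u) u - fderiv ℝ v x u‖
          = ‖(fderiv ℝ v (x + s • u) - fderiv ℝ v x) u‖ := by
            rw [ContinuousLinearMap.sub_apply]
        _ ≤ ‖fderiv ℝ v (x + s • u) - fderiv ℝ v x‖ * ‖u‖ :=
            ContinuousLinearMap.le_opNorm _ _
        _ = ‖fderiv ℝ v (x + s • u) - fderiv ℝ v x‖ := by rw [hu, mul_one]
        _ ≤ δ * ‖(x + s • u) - x‖ ^ α := hH _ _
        _ = δ * s ^ α := by
            rw [add_sub_cancel_left, norm_smul, Real.norm_eq_abs, abs_of_nonneg hs.1, hu,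
              mul_one]
        _ ≤ δ * t ^ α := by
            have := Real.rpow_le_rpow hs.1 hs.2.le hα0.le
            exact mul_le_mul_of_nonneg_left this hδ
    have htay := norm_image_sub_le_of_norm_deriv_le_segment' hgd hbound t
      (right_mem_Icc.2 htpos.le)
    have hg0 : g 0 = v x := by simp [hg]
    have hgt : g t = v (x + t • u) - t • (fderiv ℝ v x u) := rfl
    have h1 : ‖t • fderiv ℝ v x u‖ ≤ δ * t ^ α * t + ‖v (x + t • u)‖ + ‖v x‖ := by
      have : t • fderiv ℝ v x u = v (x + t • u) - v x - (g t - g 0) := by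
        rw [hgt, hg0]; abel
      rw [this]
      calc ‖v (x + t • u) - v x - (g t - g 0)‖
          ≤ ‖v (x + t • u) - v x‖ + ‖g t - g 0‖ := norm_sub_le _ _
        _ ≤ ‖v (x + t • u)‖ + ‖v x‖ + (δ * t ^ α * (t - 0)) := by
            have := norm_sub_le (v (x + t • u)) (v x)
            linarith [htay]
        _ = δ * t ^ α * t + ‖v (x + t • u)‖ + ‖v x‖ := by ring_nf
    have h2 : ‖v (x + t • u)‖ ≤ δ * R ^ (1 + α) := hsup _ hend
    have h3 : ‖v x‖ ≤ δ * R ^ (1 + α) := hsup _ (by linarith)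
    have hnorm : ‖t • fderiv ℝ v x u‖ = t * ‖fderiv ℝ v x u‖ := by
      rw [norm_smul, Real.norm_eq_abs, abs_of_pos htpos]
    have hR1α : R ^ (1 + α) = R * R ^ α := by
      rw [Real.rpow_add hR, Real.rpow_one]
    have htα : t ^ α ≤ R ^ α :=
      Real.rpow_le_rpow htpos.le (by rw [ht]; linarith) hα0.le
    have hA : t * ‖fderiv ℝ v x u‖ ≤ t * (17 * δ * R ^ α) := by
      have hR8 : R = 8 * t := by rw [ht]; ring
      calc t * ‖fderiv ℝ v x u‖ ≤ δ * t ^ α * t + ‖v (x + t • u)‖ + ‖v x‖ := by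
            rw [← hnorm]; exact h1
        _ ≤ t * (δ * t ^ α) + 2 * (δ * (R * R ^ α)) := by rw [← hR1α]; linarith
        _ = t * (δ * t ^ α) + t * (16 * δ * R ^ α) := by rw [hR8]; ring
        _ ≤ t * (δ * R ^ α) + t * (16 * δ * R ^ α) := by
            have : δ * t ^ α ≤ δ * R ^ α := mul_le_mul_of_nonneg_left htα hδ
            nlinarith [htpos.le]
        _ = t * (17 * δ * R ^ α) := by ring
    exact le_of_mul_le_mul_left hA htpos
  -- reduce general e to unit vectors
  have hne : (0:ℝ) < ‖e‖ := norm_pos_iff.2 he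
  set u₀ : E := ‖e‖⁻¹ • e with hu₀def
  have hu₀ : ‖u₀‖ = 1 := by
    rw [hu₀def, norm_smul, Real.norm_eq_abs, abs_of_pos (inv_pos.2 hne), inv_mul_cancel₀ hne.ne']
  have he_eq : e = ‖e‖ • u₀ := by rw [hu₀def, smul_smul, mul_inv_cancel₀ hne.ne', one_smul]
  have hkey : ‖fderiv ℝ v x u₀‖ ≤ 17 * δ * R ^ α := by
    by_cases h : (inner ℝ x u₀ : ℝ) ≤ 0
    · exact main u₀ hu₀ h
    · have h1 : (inner ℝ x (-u₀) : ℝ) ≤ 0 := by rw [inner_neg_right]; linarith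
      have h2 := main (-u₀) (by rw [norm_neg]; exact hu₀) h1
      rwa [map_neg, norm_neg] at h2
  calc ‖fderiv ℝ v x e‖ = ‖fderiv ℝ v x (‖e‖ • u₀)‖ := by rw [← he_eq]
    _ = ‖e‖ * ‖fderiv ℝ v x u₀‖ := by
        rw [map_smul, norm_smul, Real.norm_eq_abs, abs_of_pos hne]
    _ ≤ ‖e‖ * (17 * δ * R ^ α) := mul_le_mul_of_nonneg_left hkey hne.le
    _ = 17 * δ * R ^ α * ‖e‖ := by ring

set_option maxHeartbeats 8000000 in
theorem perturb_main (E F : Type*) [NormedAddCommGroup E] [InnerProductSpace ℝ E]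
    [FiniteDimensional ℝ E] [NormedAddCommGroup F] [NormedSpace ℝ F]
    (α : ℝ≥0) (hα0 : 0 < α) (hα1 : α ≤ 1) :
    ∀ ε : ℝ, 0 < ε → ∃ δ : ℝ, 0 < δ ∧
      ∀ (v₀ : E → F) (D Dhat : ℝ),
        0 < D → 2 * D < Dhat →
        ContDiff ℝ 1 v₀ →
        (∀ x, ‖v₀ x‖ ≤ δ) →
        (∀ x, ‖fderiv ℝ v₀ x‖ ≤ δ) →
        HolderWith δ.toNNReal α (fun x => fderiv ℝ v₀ x) →
        (∀ y ∈ closedBall (0 : E) Dhat,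
          ‖v₀ y‖ ≤ δ * Dhat ^ ((1 : ℝ) + (α : ℝ))) →
        ∃ v : E → F,
          ContDiff ℝ 1 v ∧
          (∀ x ∈ ball (0 : E) D, v x = v₀ x) ∧
          (∀ x ∉ ball (0 : E) Dhat, v x = 0) ∧
          (∀ x, ‖v x‖ ≤ ε) ∧
          (∀ x, ‖fderiv ℝ v x‖ ≤ ε) ∧
          HolderWith ε.toNNReal α (fun x => fderiv ℝ v x) := by
  have hα0' : (0:ℝ) < (α:ℝ) := by exact_mod_cast hα0
  have hα1' : (α:ℝ) ≤ 1 := by exact_mod_cast hα1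
  intro ε hε
  let f : ContDiffBump (0 : E) := ⟨1/2, 3/4, by norm_num, by norm_num⟩
  have hφ2 : ContDiff ℝ 2 ⇑f := f.contDiff
  have hφ1 : ContDiff ℝ 1 ⇑f := hφ2.of_le (by norm_num)
  have hsupp : HasCompactSupport ⇑f := f.hasCompactSupport
  set Dφ := fderiv ℝ ⇑f with hDφdef
  have hDφcd : ContDiff ℝ 1 Dφ := hφ2.fderiv_right (by norm_num)
  obtain ⟨K₀, hK₀⟩ := (hsupp.fderiv ℝ).exists_bound_of_continuous hDφcd.continuous
  set K₁ := max K₀ 1 with hK₁def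
  have hK₁ : ∀ z, ‖Dφ z‖ ≤ K₁ := fun z => (hK₀ z).trans (le_max_left _ _)
  have hK₁1 : (1:ℝ) ≤ K₁ := le_max_right _ _
  have hB := ((hsupp.fderiv ℝ).fderiv ℝ)
  have hK₂ex := @HasCompactSupport.exists_bound_of_continuous _ (E →L[ℝ] E →L[ℝ] ℝ) _ _ _
      hB (hDφcd.continuous_fderiv one_ne_zero)
  obtain ⟨K₂₀, hK₂₀⟩ := hK₂ex
  set K₂ := max K₂₀ 0 with hK₂def
  have hK₂0 : (0:ℝ) ≤ K₂ := le_max_right _ _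
  have hK₂b : ∀ z, ‖fderiv ℝ Dφ z‖ ≤ K₂ := fun z => (hK₂₀ z).trans (le_max_left K₂₀ 0)
  have hDφlip : ∀ a b : E, ‖Dφ a - Dφ b‖ ≤ K₂ * ‖a - b‖ := by
    intro a b
    exact convex_univ.norm_image_sub_le_of_norm_fderiv_le
      (fun z _ => (hDφcd.differentiable one_ne_zero).differentiableAt)
      (fun z _ => hK₂b z) (mem_univ b) (mem_univ a)
  set C' := 1 + 51 * K₁ + K₂ with hC'def
  have hC'pos : 0 < C' := by positivity
  have hC'1 : 1 ≤ C' := by nlinarith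
  refine ⟨ε / C', by positivity, ?_⟩
  set δ := ε / C' with hδdef
  have hδpos : 0 < δ := by positivity
  have hδε : δ * C' = ε := div_mul_cancel₀ _ hC'pos.ne'
  intro v₀ D Dhat hD hDD hv₀c hv₀sup hDv₀sup hHol hballsup
  have hDhat : 0 < Dhat := by linarith
  have hc : 0 < Dhat⁻¹ := inv_pos.2 hDhat
  have hcc : Dhat⁻¹ * Dhat = 1 := inv_mul_cancel₀ hDhat.ne'
  -- norm form of the Hölder hypothesis
  have hHolN : ∀ a b, ‖fderiv ℝ v₀ a - fderiv ℝ v₀ b‖ ≤ δ * ‖a - b‖ ^ (α:ℝ) := by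
    intro a b
    have h := hHol.dist_le a b
    rw [Real.coe_toNNReal _ hδpos.le] at h
    simpa [dist_eq_norm] using h
  have hballsup' : ∀ y : E, ‖y‖ ≤ Dhat → ‖v₀ y‖ ≤ δ * Dhat ^ ((1:ℝ) + (α:ℝ)) :=
    fun y hy => hballsup y (mem_closedBall_zero_iff.2 hy)
  have hderiv17 : ∀ z : E, ‖z‖ ≤ 7/8 * Dhat → ‖fderiv ℝ v₀ z‖ ≤ 17 * δ * Dhat ^ (α:ℝ) :=
    deriv_interp_bound hv₀c hδpos.le hDhat hα0' hα1' hHolN hballsup'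
  have hv₀lip : ∀ a b : E, ‖a‖ ≤ 7/8 * Dhat → ‖b‖ ≤ 7/8 * Dhat →
      ‖v₀ a - v₀ b‖ ≤ 17 * δ * Dhat ^ (α:ℝ) * ‖a - b‖ := by
    intro a b ha hb
    exact (convex_closedBall (0:E) (7/8 * Dhat)).norm_image_sub_le_of_norm_fderiv_le
      (fun z _ => (hv₀c.differentiable one_ne_zero).differentiableAt)
      (fun z hz => hderiv17 z (mem_closedBall_zero_iff.1 hz))
      (mem_closedBall_zero_iff.2 hb) (mem_closedBall_zero_iff.2 ha)
  -- the rescaled cutoff function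
  set L : E →L[ℝ] E := Dhat⁻¹ • ContinuousLinearMap.id ℝ E with hLdef
  have hLapp : ∀ x : E, L x = Dhat⁻¹ • x := by intro x; simp [hLdef]
  set χ : E → ℝ := fun x => f (Dhat⁻¹ • x) with hχdef
  set Dχ : E → (E →L[ℝ] ℝ) := fun x => (Dφ (Dhat⁻¹ • x)).comp L with hDχdef
  have hχdiff : ∀ x, HasFDerivAt χ (Dχ x) x := by
    intro x
    have h1 : HasFDerivAt (⇑f) (Dφ (Dhat⁻¹ • x)) (L x) := by
      rw [hLapp]
      exact ((hφ1.differentiable one_ne_zero) _).hasFDerivAt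
    have h2 : HasFDerivAt (fun y : E => L y) L x := L.hasFDerivAt
    have := h1.comp x h2
    simpa [hχdef, Function.comp_def, hLapp, hDχdef] using this
  have hLnorm : ‖L‖ ≤ Dhat⁻¹ := by
    apply ContinuousLinearMap.opNorm_le_bound _ hc.le
    intro x
    rw [hLapp x, norm_smul, Real.norm_eq_abs, abs_of_pos hc]
  have hnorm_inv_smul : ∀ x : E, ‖Dhat⁻¹ • x‖ = Dhat⁻¹ * ‖x‖ := by
    intro x; rw [norm_smul, Real.norm_eq_abs, abs_of_pos hc]
  have hχ0le : ∀ x, 0 ≤ χ x := fun x => f.nonneg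
  have hχle1 : ∀ x, χ x ≤ 1 := fun x => f.le_one
  have hχone : ∀ x : E, ‖x‖ < D → χ x = 1 := by
    intro x hx
    apply f.one_of_mem_closedBall
    rw [mem_closedBall, dist_zero_right, hnorm_inv_smul]
    show Dhat⁻¹ * ‖x‖ ≤ 1/2
    nlinarith [norm_nonneg x]
  have hχzero : ∀ x : E, Dhat ≤ ‖x‖ → χ x = 0 := by
    intro x hx
    apply f.zero_of_le_dist
    rw [dist_zero_right, hnorm_inv_smul]
    show (3/4 : ℝ) ≤ Dhat⁻¹ * ‖x‖
    nlinarith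
  have hχsupp : ∀ x : E, χ x ≠ 0 → ‖x‖ < 3/4 * Dhat := by
    intro x hx
    have : Dhat⁻¹ • x ∈ Function.support ⇑f := Function.mem_support.2 hx
    rw [f.support_eq, mem_ball, dist_zero_right, hnorm_inv_smul] at this
    have h34 : f.rOut = 3/4 := rfl
    rw [h34] at this
    nlinarith
  have hDχsupp : ∀ x : E, Dχ x ≠ 0 → ‖x‖ ≤ 3/4 * Dhat := by
    intro x hx
    have hne : Dφ (Dhat⁻¹ • x) ≠ 0 := by
      intro h0
      apply hx
      rw [hDχdef]
      simp only [h0, ContinuousLinearMap.zero_comp]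
    have : Dhat⁻¹ • x ∈ tsupport ⇑f :=
      support_fderiv_subset ℝ (Function.mem_support.2 hne)
    rw [f.tsupport_eq, mem_closedBall, dist_zero_right, hnorm_inv_smul] at this
    have h34 : f.rOut = 3/4 := rfl
    rw [h34] at this
    nlinarith
  have hDχnorm : ∀ x, ‖Dχ x‖ ≤ K₁ * Dhat⁻¹ := by
    intro x
    calc ‖Dχ x‖ ≤ ‖Dφ (Dhat⁻¹ • x)‖ * ‖L‖ := ContinuousLinearMap.opNorm_comp_le _ _
      _ ≤ K₁ * Dhat⁻¹ :=
        mul_le_mul (hK₁ _) hLnorm (norm_nonneg _) (by linarith)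
  have hDχlip : ∀ a b, ‖Dχ a - Dχ b‖ ≤ K₂ * Dhat⁻¹ * Dhat⁻¹ * ‖a - b‖ := by
    intro a b
    have heq : Dχ a - Dχ b = (Dφ (Dhat⁻¹ • a) - Dφ (Dhat⁻¹ • b)).comp L := by
      rw [hDχdef]; simp [ContinuousLinearMap.sub_comp]
    rw [heq]
    calc ‖(Dφ (Dhat⁻¹ • a) - Dφ (Dhat⁻¹ • b)).comp L‖
        ≤ ‖Dφ (Dhat⁻¹ • a) - Dφ (Dhat⁻¹ • b)‖ * ‖L‖ := ContinuousLinearMap.opNorm_comp_le _ _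
      _ ≤ (K₂ * ‖Dhat⁻¹ • a - Dhat⁻¹ • b‖) * Dhat⁻¹ := by
          apply mul_le_mul (hDφlip _ _) hLnorm (norm_nonneg _)
          positivity
      _ = K₂ * Dhat⁻¹ * Dhat⁻¹ * ‖a - b‖ := by
          rw [← smul_sub, hnorm_inv_smul]; ring
  have hχlip : ∀ a b : E, ‖χ a - χ b‖ ≤ K₁ * Dhat⁻¹ * ‖a - b‖ := by
    intro a b
    exact convex_univ.norm_image_sub_le_of_norm_fderiv_le
      (fun z _ => (hχdiff z).differentiableAt)
      (fun z _ => by rw [(hχdiff z).fderiv]; exact hDχnorm z) (mem_univ b) (mem_univ a)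
  -- the perturbed map
  set v : E → F := fun x => χ x • v₀ x with hvdef
  have hvd : ∀ x, HasFDerivAt v (χ x • fderiv ℝ v₀ x + (Dχ x).smulRight (v₀ x)) x := by
    intro x
    exact (hχdiff x).smul ((hv₀c.differentiable one_ne_zero) x).hasFDerivAt
  have hfv : ∀ x, fderiv ℝ v x = χ x • fderiv ℝ v₀ x + (Dχ x).smulRight (v₀ x) :=
    fun x => (hvd x).fderiv
  have hχcd : ContDiff ℝ 1 χ := hφ1.comp (contDiff_id.const_smul (Dhat⁻¹ : ℝ))
  -- quantitative facts
  have hvq1 : ∀ x : E, ‖x‖ ≤ Dhat → Dhat⁻¹ * ‖v₀ x‖ ≤ δ * Dhat ^ (α:ℝ) := by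
    intro x hx
    have h := hballsup' x hx
    have h1α : Dhat ^ ((1:ℝ) + (α:ℝ)) = Dhat * Dhat ^ (α:ℝ) := by
      rw [Real.rpow_add hDhat, Real.rpow_one]
    calc Dhat⁻¹ * ‖v₀ x‖ ≤ Dhat⁻¹ * (δ * (Dhat * Dhat ^ (α:ℝ))) := by
          rw [← h1α]; exact mul_le_mul_of_nonneg_left h hc.le
      _ = (Dhat⁻¹ * Dhat) * (δ * Dhat ^ (α:ℝ)) := by ring
      _ = δ * Dhat ^ (α:ℝ) := by rw [hcc, one_mul]
  have hvq0 : ∀ x : E, ‖x‖ ≤ Dhat → Dhat⁻¹ * ‖v₀ x‖ ≤ δ := by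
    intro x hx
    rcases le_total 1 Dhat with h1 | h1
    · have : Dhat⁻¹ ≤ 1 := by
        rw [inv_le_one_iff₀]; right; exact h1
      calc Dhat⁻¹ * ‖v₀ x‖ ≤ 1 * δ :=
            mul_le_mul this (hv₀sup x) (norm_nonneg _) zero_le_one
        _ = δ := one_mul _
    · have hle1 : Dhat ^ (α:ℝ) ≤ 1 := Real.rpow_le_one hDhat.le h1 hα0'.le
      calc Dhat⁻¹ * ‖v₀ x‖ ≤ δ * Dhat ^ (α:ℝ) := hvq1 x hx
        _ ≤ δ * 1 := mul_le_mul_of_nonneg_left hle1 hδpos.le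
        _ = δ := mul_one _
  have hvc : ContDiff ℝ 1 v := by rw [hvdef]; exact hχcd.smul hv₀c
  clear_value Dφ L χ Dχ v
  refine ⟨v, hvc, ?_, ?_, ?_, ?_, ?_⟩
  · -- agrees with v₀ on ball D
    intro x hx
    rw [mem_ball, dist_zero_right] at hx
    rw [hvdef]
    simp only
    rw [hχone x hx, one_smul]
  · -- vanishes outside ball Dhat
    intro x hx
    rw [mem_ball, dist_zero_right, not_lt] at hx
    rw [hvdef]
    simp only
    rw [hχzero x hx, zero_smul]
  · -- sup bound
    intro x
    rw [hvdef]
    simp only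
    rw [norm_smul, Real.norm_eq_abs, abs_of_nonneg (hχ0le x)]
    calc χ x * ‖v₀ x‖ ≤ 1 * δ :=
          mul_le_mul (hχle1 x) (hv₀sup x) (norm_nonneg _) zero_le_one
      _ = δ := one_mul _
      _ ≤ δ * C' := le_mul_of_one_le_right hδpos.le hC'1
      _ = ε := hδε
  · -- derivative bound
    intro x
    rw [hfv x]
    have h1 : ‖χ x • fderiv ℝ v₀ x‖ ≤ δ := by
      calc ‖χ x • fderiv ℝ v₀ x‖ ≤ ‖χ x‖ * ‖fderiv ℝ v₀ x‖ := ContinuousLinearMap.opNorm_smul_le _ _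
        _ ≤ 1 * δ := by
            rw [Real.norm_eq_abs, abs_of_nonneg (hχ0le x)]
            exact mul_le_mul (hχle1 x) (hDv₀sup x) (norm_nonneg _) zero_le_one
        _ = δ := one_mul _
    have h2 : ‖(Dχ x).smulRight (v₀ x)‖ ≤ K₁ * δ := by
      rcases eq_or_ne (Dχ x) 0 with h0 | h0
      · rw [h0]; simp; positivity
      · rw [ContinuousLinearMap.norm_smulRight_apply]
        have hx : ‖x‖ ≤ Dhat := (hDχsupp x h0).trans (by linarith)
        calc ‖Dχ x‖ * ‖v₀ x‖ ≤ (K₁ * Dhat⁻¹) * ‖v₀ x‖ :=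
              mul_le_mul_of_nonneg_right (hDχnorm x) (norm_nonneg _)
          _ = K₁ * (Dhat⁻¹ * ‖v₀ x‖) := by ring
          _ ≤ K₁ * δ := mul_le_mul_of_nonneg_left (hvq0 x hx) (by linarith)
    calc ‖χ x • fderiv ℝ v₀ x + (Dχ x).smulRight (v₀ x)‖
        ≤ δ + K₁ * δ := (norm_add_le _ _).trans (add_le_add h1 h2)
      _ ≤ δ * C' := by nlinarith
      _ = ε := hδε
  · -- Hölder bound
    apply holderWith_of_dist_le'
    intro x y
    rw [Real.coe_toNNReal _ hε.le]
    -- T1 : the `χ • Dv₀` part, assuming `χ b ≠ 0`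
    have hT1 : ∀ a b : E, χ b ≠ 0 →
        ‖χ a • fderiv ℝ v₀ a - χ b • fderiv ℝ v₀ b‖
          ≤ (1 + 17 * K₁) * δ * ‖a - b‖ ^ (α:ℝ) := by
      intro a b hb
      rcases eq_or_ne a b with rfl | hab
      · simp only [sub_self, norm_zero]
        positivity
      have hs : (0:ℝ) < ‖a - b‖ := by rw [norm_pos_iff, sub_ne_zero]; exact hab
      have hsα : (0:ℝ) ≤ ‖a - b‖ ^ (α:ℝ) := Real.rpow_nonneg hs.le _
      have hDb : ‖fderiv ℝ v₀ b‖ ≤ 17 * δ * Dhat ^ (α:ℝ) :=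
        hderiv17 b ((hχsupp b hb).le.trans (by linarith))
      have hdec : χ a • fderiv ℝ v₀ a - χ b • fderiv ℝ v₀ b
          = χ a • (fderiv ℝ v₀ a - fderiv ℝ v₀ b) + (χ a - χ b) • fderiv ℝ v₀ b := by
        rw [smul_sub, sub_smul]; abel
      rw [hdec]
      have h1 : ‖χ a • (fderiv ℝ v₀ a - fderiv ℝ v₀ b)‖ ≤ δ * ‖a - b‖ ^ (α:ℝ) := by
        calc ‖χ a • (fderiv ℝ v₀ a - fderiv ℝ v₀ b)‖
            ≤ ‖χ a‖ * ‖fderiv ℝ v₀ a - fderiv ℝ v₀ b‖ :=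
              ContinuousLinearMap.opNorm_smul_le _ _
          _ ≤ 1 * (δ * ‖a - b‖ ^ (α:ℝ)) := by
              rw [Real.norm_eq_abs, abs_of_nonneg (hχ0le a)]
              exact mul_le_mul (hχle1 a) (hHolN a b) (norm_nonneg _) zero_le_one
          _ = δ * ‖a - b‖ ^ (α:ℝ) := one_mul _
      have h2 : ‖(χ a - χ b) • fderiv ℝ v₀ b‖ ≤ 17 * K₁ * δ * ‖a - b‖ ^ (α:ℝ) := by
        have hbase : ‖(χ a - χ b) • fderiv ℝ v₀ b‖ ≤ ‖χ a - χ b‖ * (17 * δ * Dhat ^ (α:ℝ)) :=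
          (ContinuousLinearMap.opNorm_smul_le _ _).trans
            (mul_le_mul_of_nonneg_left hDb (norm_nonneg _))
        rcases le_total ‖a - b‖ Dhat with hcase | hcase
        · have hkey : ‖a - b‖ * Dhat ^ (α:ℝ) ≤ ‖a - b‖ ^ (α:ℝ) * Dhat :=
            aux_mul_rpow hα0' hα1' hs.le hDhat hcase
          calc ‖(χ a - χ b) • fderiv ℝ v₀ b‖
              ≤ (K₁ * Dhat⁻¹ * ‖a - b‖) * (17 * δ * Dhat ^ (α:ℝ)) :=
                hbase.trans (mul_le_mul_of_nonneg_right (hχlip a b) (by positivity))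
            _ = 17 * K₁ * δ * (‖a - b‖ * Dhat ^ (α:ℝ)) * Dhat⁻¹ := by ring
            _ ≤ 17 * K₁ * δ * (‖a - b‖ ^ (α:ℝ) * Dhat) * Dhat⁻¹ := by
                have h17 : (0:ℝ) ≤ 17 * K₁ * δ := by positivity
                exact mul_le_mul_of_nonneg_right
                  (mul_le_mul_of_nonneg_left hkey h17) hc.le
            _ = 17 * K₁ * δ * ‖a - b‖ ^ (α:ℝ) * (Dhat * Dhat⁻¹) := by ring
            _ = 17 * K₁ * δ * ‖a - b‖ ^ (α:ℝ) := by
                rw [mul_inv_cancel₀ hDhat.ne', mul_one]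
        · have hχab : ‖χ a - χ b‖ ≤ 1 := by
            rw [Real.norm_eq_abs, abs_le]
            constructor
            · nlinarith [hχ0le a, hχle1 b]
            · nlinarith [hχle1 a, hχ0le b]
          have hDr : Dhat ^ (α:ℝ) ≤ ‖a - b‖ ^ (α:ℝ) :=
            Real.rpow_le_rpow hDhat.le hcase hα0'.le
          calc ‖(χ a - χ b) • fderiv ℝ v₀ b‖ ≤ 1 * (17 * δ * Dhat ^ (α:ℝ)) :=
                hbase.trans (mul_le_mul_of_nonneg_right hχab (by positivity))
            _ = 17 * δ * Dhat ^ (α:ℝ) := one_mul _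
            _ ≤ 17 * K₁ * δ * ‖a - b‖ ^ (α:ℝ) := by
                nlinarith [mul_le_mul_of_nonneg_left hDr hδpos.le,
                  mul_nonneg hδpos.le hsα, hK₁1]
      calc ‖χ a • (fderiv ℝ v₀ a - fderiv ℝ v₀ b) + (χ a - χ b) • fderiv ℝ v₀ b‖
          ≤ δ * ‖a - b‖ ^ (α:ℝ) + 17 * K₁ * δ * ‖a - b‖ ^ (α:ℝ) :=
            (norm_add_le _ _).trans (add_le_add h1 h2)
        _ = (1 + 17 * K₁) * δ * ‖a - b‖ ^ (α:ℝ) := by ring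
    -- T2 : the `Dχ ⊗ v₀` part, assuming `Dχ b ≠ 0`
    have hT2 : ∀ a b : E, Dχ b ≠ 0 →
        ‖(Dχ a).smulRight (v₀ a) - (Dχ b).smulRight (v₀ b)‖
          ≤ (33 * K₁ + K₂) * δ * ‖a - b‖ ^ (α:ℝ) := by
      intro a b hb
      rcases eq_or_ne a b with rfl | hab
      · simp only [sub_self, norm_zero]
        positivity
      have hs : (0:ℝ) < ‖a - b‖ := by rw [norm_pos_iff, sub_ne_zero]; exact hab
      have hsα : (0:ℝ) ≤ ‖a - b‖ ^ (α:ℝ) := Real.rpow_nonneg hs.le _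
      have hbn : ‖b‖ ≤ 3/4 * Dhat := hDχsupp b hb
      rcases le_total (Dhat / 8) ‖a - b‖ with hcase | hcase
      · -- large distance
        have hone : ∀ z : E, ‖(Dχ z).smulRight (v₀ z)‖ ≤ K₁ * (δ * Dhat ^ (α:ℝ)) := by
          intro z
          rcases eq_or_ne (Dχ z) 0 with h0 | h0
          · rw [h0]
            have : (0 : E →L[ℝ] ℝ).smulRight (v₀ z) = 0 := by
              ext w; simp
            rw [this, norm_zero]
            positivity
          · rw [ContinuousLinearMap.norm_smulRight_apply]
            have hz : ‖z‖ ≤ Dhat := (hDχsupp z h0).trans (by linarith)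
            calc ‖Dχ z‖ * ‖v₀ z‖ ≤ (K₁ * Dhat⁻¹) * ‖v₀ z‖ :=
                  mul_le_mul_of_nonneg_right (hDχnorm z) (norm_nonneg _)
              _ = K₁ * (Dhat⁻¹ * ‖v₀ z‖) := by ring
              _ ≤ K₁ * (δ * Dhat ^ (α:ℝ)) :=
                  mul_le_mul_of_nonneg_left (hvq1 z hz) (by linarith)
        have h8 : Dhat ^ (α:ℝ) ≤ 8 * ‖a - b‖ ^ (α:ℝ) := by
          have h1 : Dhat ≤ 8 * ‖a - b‖ := by linarith
          calc Dhat ^ (α:ℝ) ≤ (8 * ‖a - b‖) ^ (α:ℝ) :=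
                Real.rpow_le_rpow hDhat.le h1 hα0'.le
            _ = 8 ^ (α:ℝ) * ‖a - b‖ ^ (α:ℝ) := Real.mul_rpow (by norm_num) hs.le
            _ ≤ 8 * ‖a - b‖ ^ (α:ℝ) := by
                have h88 : (8:ℝ) ^ (α:ℝ) ≤ 8 ^ (1:ℝ) :=
                  Real.rpow_le_rpow_of_exponent_le (by norm_num) hα1'
                rw [Real.rpow_one] at h88
                exact mul_le_mul_of_nonneg_right h88 hsα
        calc ‖(Dχ a).smulRight (v₀ a) - (Dχ b).smulRight (v₀ b)‖
            ≤ K₁ * (δ * Dhat ^ (α:ℝ)) + K₁ * (δ * Dhat ^ (α:ℝ)) :=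
              (norm_sub_le _ _).trans (add_le_add (hone a) (hone b))
          _ = 2 * K₁ * δ * Dhat ^ (α:ℝ) := by ring
          _ ≤ 2 * K₁ * δ * (8 * ‖a - b‖ ^ (α:ℝ)) :=
              mul_le_mul_of_nonneg_left h8 (by positivity)
          _ = 16 * K₁ * δ * ‖a - b‖ ^ (α:ℝ) := by ring
          _ ≤ (33 * K₁ + K₂) * δ * ‖a - b‖ ^ (α:ℝ) :=
              mul_le_mul_of_nonneg_right
                (mul_le_mul_of_nonneg_right (by linarith) hδpos.le) hsα
      · -- small distance
        have han : ‖a‖ ≤ 7/8 * Dhat := by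
          have h1 : ‖a‖ ≤ ‖b‖ + ‖a - b‖ := by
            calc ‖a‖ = ‖b + (a - b)‖ := by rw [show b + (a - b) = a by abel]
              _ ≤ ‖b‖ + ‖a - b‖ := norm_add_le _ _
          linarith
        have habD : ‖a - b‖ ≤ Dhat := by linarith
        have hdec : (Dχ a).smulRight (v₀ a) - (Dχ b).smulRight (v₀ b)
            = (Dχ a - Dχ b).smulRight (v₀ a) + (Dχ b).smulRight (v₀ a - v₀ b) := by
          ext w
          simp only [ContinuousLinearMap.add_apply, ContinuousLinearMap.sub_apply,
            ContinuousLinearMap.smulRight_apply, sub_smul, smul_sub]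
          abel
        have hkey : ‖a - b‖ * Dhat ^ (α:ℝ) ≤ ‖a - b‖ ^ (α:ℝ) * Dhat :=
          aux_mul_rpow hα0' hα1' hs.le hDhat habD
        have h1 : ‖(Dχ a - Dχ b).smulRight (v₀ a)‖ ≤ K₂ * δ * ‖a - b‖ ^ (α:ℝ) := by
          rw [ContinuousLinearMap.norm_smulRight_apply]
          have hva : ‖v₀ a‖ ≤ δ * Dhat ^ ((1:ℝ)+(α:ℝ)) := hballsup' a (by linarith)
          have h1α : Dhat ^ ((1:ℝ) + (α:ℝ)) = Dhat * Dhat ^ (α:ℝ) := by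
            rw [Real.rpow_add hDhat, Real.rpow_one]
          calc ‖Dχ a - Dχ b‖ * ‖v₀ a‖
              ≤ (K₂ * Dhat⁻¹ * Dhat⁻¹ * ‖a - b‖) * (δ * (Dhat * Dhat ^ (α:ℝ))) := by
                rw [← h1α]
                exact mul_le_mul (hDχlip a b) hva (norm_nonneg _) (by positivity)
            _ = K₂ * δ * (‖a - b‖ * Dhat ^ (α:ℝ)) * Dhat⁻¹ * (Dhat⁻¹ * Dhat) := by ring
            _ = K₂ * δ * (‖a - b‖ * Dhat ^ (α:ℝ)) * Dhat⁻¹ := by rw [hcc, mul_one]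
            _ ≤ K₂ * δ * (‖a - b‖ ^ (α:ℝ) * Dhat) * Dhat⁻¹ := by
                have h0 : (0:ℝ) ≤ K₂ * δ := by positivity
                exact mul_le_mul_of_nonneg_right
                  (mul_le_mul_of_nonneg_left hkey h0) hc.le
            _ = K₂ * δ * ‖a - b‖ ^ (α:ℝ) * (Dhat * Dhat⁻¹) := by ring
            _ = K₂ * δ * ‖a - b‖ ^ (α:ℝ) := by rw [mul_inv_cancel₀ hDhat.ne', mul_one]
        have h2 : ‖(Dχ b).smulRight (v₀ a - v₀ b)‖ ≤ 17 * K₁ * δ * ‖a - b‖ ^ (α:ℝ) := by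
          rw [ContinuousLinearMap.norm_smulRight_apply]
          have hvab : ‖v₀ a - v₀ b‖ ≤ 17 * δ * Dhat ^ (α:ℝ) * ‖a - b‖ :=
            hv₀lip a b han (by linarith)
          calc ‖Dχ b‖ * ‖v₀ a - v₀ b‖
              ≤ (K₁ * Dhat⁻¹) * (17 * δ * Dhat ^ (α:ℝ) * ‖a - b‖) :=
                mul_le_mul (hDχnorm b) hvab (norm_nonneg _) (by positivity)
            _ = 17 * K₁ * δ * (‖a - b‖ * Dhat ^ (α:ℝ)) * Dhat⁻¹ := by ring
            _ ≤ 17 * K₁ * δ * (‖a - b‖ ^ (α:ℝ) * Dhat) * Dhat⁻¹ := by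
                have h0 : (0:ℝ) ≤ 17 * K₁ * δ := by positivity
                exact mul_le_mul_of_nonneg_right
                  (mul_le_mul_of_nonneg_left hkey h0) hc.le
            _ = 17 * K₁ * δ * ‖a - b‖ ^ (α:ℝ) * (Dhat * Dhat⁻¹) := by ring
            _ = 17 * K₁ * δ * ‖a - b‖ ^ (α:ℝ) := by rw [mul_inv_cancel₀ hDhat.ne', mul_one]
        calc ‖(Dχ a).smulRight (v₀ a) - (Dχ b).smulRight (v₀ b)‖
            = ‖(Dχ a - Dχ b).smulRight (v₀ a) + (Dχ b).smulRight (v₀ a - v₀ b)‖ := by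
              rw [hdec]
          _ ≤ K₂ * δ * ‖a - b‖ ^ (α:ℝ) + 17 * K₁ * δ * ‖a - b‖ ^ (α:ℝ) :=
              (norm_add_le _ _).trans (add_le_add h1 h2)
          _ = (17 * K₁ + K₂) * δ * ‖a - b‖ ^ (α:ℝ) := by ring
          _ ≤ (33 * K₁ + K₂) * δ * ‖a - b‖ ^ (α:ℝ) :=
              mul_le_mul_of_nonneg_right
                (mul_le_mul_of_nonneg_right (by linarith) hδpos.le) hsα
    -- symmetrized versions
    have hT1' : ∀ a b : E,
        ‖χ a • fderiv ℝ v₀ a - χ b • fderiv ℝ v₀ b‖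
          ≤ (1 + 17 * K₁) * δ * ‖a - b‖ ^ (α:ℝ) := by
      intro a b
      rcases eq_or_ne (χ b) 0 with h0 | h0
      · rcases eq_or_ne (χ a) 0 with h0' | h0'
        · rw [h0, h0', zero_smul, zero_smul, sub_self, norm_zero]
          positivity
        · calc ‖χ a • fderiv ℝ v₀ a - χ b • fderiv ℝ v₀ b‖
              = ‖χ b • fderiv ℝ v₀ b - χ a • fderiv ℝ v₀ a‖ := norm_sub_rev _ _
            _ ≤ (1 + 17 * K₁) * δ * ‖b - a‖ ^ (α:ℝ) := hT1 b a h0'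
            _ = (1 + 17 * K₁) * δ * ‖a - b‖ ^ (α:ℝ) := by rw [norm_sub_rev]
      · exact hT1 a b h0
    have hT2' : ∀ a b : E,
        ‖(Dχ a).smulRight (v₀ a) - (Dχ b).smulRight (v₀ b)‖
          ≤ (33 * K₁ + K₂) * δ * ‖a - b‖ ^ (α:ℝ) := by
      intro a b
      rcases eq_or_ne (Dχ b) 0 with h0 | h0
      · rcases eq_or_ne (Dχ a) 0 with h0' | h0'
        · have hz : ∀ w : F, (0 : E →L[ℝ] ℝ).smulRight w = 0 := by
            intro w; ext u; simp
          rw [h0, h0', hz, hz, sub_self, norm_zero]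
          positivity
        · calc ‖(Dχ a).smulRight (v₀ a) - (Dχ b).smulRight (v₀ b)‖
              = ‖(Dχ b).smulRight (v₀ b) - (Dχ a).smulRight (v₀ a)‖ := norm_sub_rev _ _
            _ ≤ (33 * K₁ + K₂) * δ * ‖b - a‖ ^ (α:ℝ) := hT2 b a h0'
            _ = (33 * K₁ + K₂) * δ * ‖a - b‖ ^ (α:ℝ) := by rw [norm_sub_rev]
      · exact hT2 a b h0
    -- combine
    rw [dist_eq_norm, dist_eq_norm, hfv x, hfv y]
    have hsplit : (χ x • fderiv ℝ v₀ x + (Dχ x).smulRight (v₀ x))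
          - (χ y • fderiv ℝ v₀ y + (Dχ y).smulRight (v₀ y))
        = (χ x • fderiv ℝ v₀ x - χ y • fderiv ℝ v₀ y)
          + ((Dχ x).smulRight (v₀ x) - (Dχ y).smulRight (v₀ y)) := by abel
    rw [hsplit]
    have hxyα : (0:ℝ) ≤ ‖x - y‖ ^ (α:ℝ) := Real.rpow_nonneg (norm_nonneg _) _
    calc ‖(χ x • fderiv ℝ v₀ x - χ y • fderiv ℝ v₀ y)
          + ((Dχ x).smulRight (v₀ x) - (Dχ y).smulRight (v₀ y))‖
        ≤ (1 + 17 * K₁) * δ * ‖x - y‖ ^ (α:ℝ) + (33 * K₁ + K₂) * δ * ‖x - y‖ ^ (α:ℝ) :=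
          (norm_add_le _ _).trans (add_le_add (hT1' x y) (hT2' x y))
      _ = (1 + 50 * K₁ + K₂) * δ * ‖x - y‖ ^ (α:ℝ) := by ring
      _ ≤ C' * δ * ‖x - y‖ ^ (α:ℝ) :=
          mul_le_mul_of_nonneg_right
            (mul_le_mul_of_nonneg_right (by rw [hC'def]; linarith) hδpos.le) hxyα
      _ = ε * ‖x - y‖ ^ (α:ℝ) := by rw [mul_comm C' δ, hδε]


/-- Lemma 6.1 of the paper (elementary `C^{1+α}`-perturbation lemma).
The `C^{1+α}`-size of a `C¹` map `v` with `α`-Hölder derivative is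
`max(sup‖v‖, sup‖Dv‖, Höl_α(Dv))`; "size ≤ c" is encoded by the three bounds
`∀ x, ‖v x‖ ≤ c`, `∀ x, ‖fderiv ℝ v x‖ ≤ c` and `HolderWith c.toNNReal α (fderiv ℝ v)`. -/
theorem stmt_1 (d l : ℕ) (hd : 1 ≤ d) (hl : 1 ≤ l)
    (α : ℝ≥0) (hα0 : 0 < α) (hα1 : α ≤ 1) :
    ∀ ε : ℝ, 0 < ε → ∃ δ : ℝ, 0 < δ ∧
      ∀ (v₀ : EuclideanSpace ℝ (Fin d) → EuclideanSpace ℝ (Fin l)) (D Dhat : ℝ),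
        0 < D → 2 * D < Dhat →
        ContDiff ℝ 1 v₀ →
        -- the `C^{1+α}`-size of `v₀` is at most `δ`:
        (∀ x, ‖v₀ x‖ ≤ δ) →
        (∀ x, ‖fderiv ℝ v₀ x‖ ≤ δ) →
        HolderWith δ.toNNReal α (fun x => fderiv ℝ v₀ x) →
        -- `Dhat ^ (-(1+α)) * sup_{B(0,Dhat)} ‖v₀‖ ≤ δ`:
        (∀ y ∈ closedBall (0 : EuclideanSpace ℝ (Fin d)) Dhat,
          ‖v₀ y‖ ≤ δ * Dhat ^ ((1 : ℝ) + (α : ℝ))) →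
        ∃ v : EuclideanSpace ℝ (Fin d) → EuclideanSpace ℝ (Fin l),
          ContDiff ℝ 1 v ∧
          (∀ x ∈ ball (0 : EuclideanSpace ℝ (Fin d)) D, v x = v₀ x) ∧
          (∀ x ∉ ball (0 : EuclideanSpace ℝ (Fin d)) Dhat, v x = 0) ∧
          -- the `C^{1+α}`-size of `v` is at most `ε`:
          (∀ x, ‖v x‖ ≤ ε) ∧
          (∀ x, ‖fderiv ℝ v x‖ ≤ ε) ∧
          HolderWith ε.toNNReal α (fun x => fderiv ℝ v x) := by
  exact perturb_main (EuclideanSpace ℝ (Fin d)) (EuclideanSpace ℝ (Fin l)) α hα0 hα1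
end

section
/- Let λ ∈ (0,1), α > 0, K > 0 with λ·K^α < 1, and let C ≥ 0, M ≥ 0, δ ≥ 0. Let (a_k)_{k∈ℕ} be a sequence of nonnegative real numbers such that a_k ≤ M for all k and a_k ≤ λ·a_{k+1} + C·(K^{k+1}·δ)^α for all k. Then a₀ ≤ (C·K^α/(1 − λ·K^α))·δ^α. (This is the inductive estimate proved in Lemma 6.1.2 ('l.bundle') of the paper, giving the α-Hölder regularity of the strong stable bundle: there the a_k are the distances d(E^{ss}_{f^k(z)}, E^{ss}_{f^k(z')}), δ = d(z,z'), K > ‖Df‖_∞ and λ is the domination constant.) -/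
/-- The inductive estimate from Lemma `l.bundle` (Section 6.1.2) of the paper,
giving `α`-Hölder regularity of the strong stable bundle: if `0 ≤ a k ≤ M`,
`a k ≤ λ·a (k+1) + C·(K^{k+1}·δ)^α` for all `k`, and `λ·K^α < 1`, then
`a 0 ≤ (C·K^α/(1 - λ·K^α))·δ^α`. -/
theorem stmt_11 (lam α K C M δ : ℝ)
    (hlam : lam ∈ Set.Ioo (0 : ℝ) 1) (hα : 0 < α) (hK : 0 < K)
    (hsmall : lam * K ^ α < 1) (hC : 0 ≤ C) (hM : 0 ≤ M) (hδ : 0 ≤ δ)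
    (a : ℕ → ℝ) (ha0 : ∀ k, 0 ≤ a k) (haM : ∀ k, a k ≤ M)
    (hrec : ∀ k, a k ≤ lam * a (k + 1) + C * (K ^ (k + 1) * δ) ^ α) :
    a 0 ≤ C * K ^ α / (1 - lam * K ^ α) * δ ^ α := by
  obtain ⟨hlam0, hlam1⟩ := hlam
  have hKα : (0:ℝ) < K ^ α := Real.rpow_pos_of_pos hK α
  set q : ℝ := lam * K ^ α with hq
  have hq0 : 0 ≤ q := by positivity
  have hq1 : q < 1 := hsmall
  have hpow : ∀ n : ℕ, (K ^ (n+1) * δ) ^ α = (K ^ α) ^ (n+1) * δ ^ α := by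
    intro n
    rw [Real.mul_rpow (by positivity) hδ, ← Real.rpow_natCast K (n+1),
      ← Real.rpow_natCast (K ^ α) (n+1), ← Real.rpow_mul hK.le,
      ← Real.rpow_mul hK.le, mul_comm α]
  have key : ∀ n : ℕ, a 0 ≤ lam ^ n * a n
      + C * K ^ α * δ ^ α * ∑ j ∈ Finset.range n, q ^ j := by
    intro n
    induction n with
    | zero => simp
    | succ n ih =>
      have h1 : lam ^ n * a n ≤ lam ^ n * (lam * a (n+1) + C * (K ^ (n+1) * δ) ^ α) := by
        apply mul_le_mul_of_nonneg_left (hrec n) (by positivity)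
      calc a 0 ≤ lam ^ n * a n + C * K ^ α * δ ^ α * ∑ j ∈ Finset.range n, q ^ j := ih
        _ ≤ lam ^ n * (lam * a (n+1) + C * (K ^ (n+1) * δ) ^ α)
            + C * K ^ α * δ ^ α * ∑ j ∈ Finset.range n, q ^ j := by linarith
        _ = lam ^ (n+1) * a (n+1)
            + C * K ^ α * δ ^ α * ∑ j ∈ Finset.range (n+1), q ^ j := by
            rw [hpow n, Finset.sum_range_succ, hq]
            ring
  have hsum : ∀ n : ℕ, ∑ j ∈ Finset.range n, q ^ j ≤ 1 / (1 - q) := by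
    intro n
    rw [geom_sum_eq (by linarith)]
    have h : (q ^ n - 1) / (q - 1) = (1 - q ^ n) / (1 - q) := by
      rw [← neg_div_neg_eq]; ring_nf
    rw [h, div_le_div_iff₀ (by linarith) (by linarith)]
    nlinarith [pow_nonneg hq0 n]
  have hbd : ∀ n : ℕ, a 0 ≤ lam ^ n * M + C * K ^ α * δ ^ α * (1 / (1 - q)) := by
    intro n
    calc a 0 ≤ lam ^ n * a n + C * K ^ α * δ ^ α * ∑ j ∈ Finset.range n, q ^ j := key n
      _ ≤ lam ^ n * M + C * K ^ α * δ ^ α * (1 / (1 - q)) :=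
          add_le_add (mul_le_mul_of_nonneg_left (haM n) (pow_nonneg hlam0.le n))
            (mul_le_mul_of_nonneg_left (hsum n) (by positivity))
  have hlim : Filter.Tendsto (fun n : ℕ => lam ^ n * M + C * K ^ α * δ ^ α * (1 / (1 - q)))
      Filter.atTop (nhds (0 * M + C * K ^ α * δ ^ α * (1 / (1 - q)))) := by
    exact ((tendsto_pow_atTop_nhds_zero_of_lt_one (by linarith) hlam1).mul_const M).add
      tendsto_const_nhds
  have := ge_of_tendsto' hlim hbd
  calc a 0 ≤ 0 * M + C * K ^ α * δ ^ α * (1 / (1 - q)) := this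
    _ = C * K ^ α / (1 - lam * K ^ α) * δ ^ α := by rw [hq]; ring
end
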